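/- Let K be a field, and let H11 be an n1×m1 matrix and H12 an n1×m2 matrix over K. If U10 is a matrix whose columns form a basis of the kernel of H12ᵀ (the left null space of H12), then rank(U10ᵀ · H11) = rank([H11 | H12]) − rank(H12). -/

import Mathlib

open Matrix

section Aux

variable {K : Type*} [Field K] {V W : Type*} [AddCommGroup V] [Module K V]
  [AddCommGroup W] [Module K W]

lemma finrank_map_add_finrank_inf_ker [FiniteDimensional K V]
    (f : V →ₗ[K] W) (p : Submodule K V) :
    Module.finrank K (p.map f) + Module.finrank K (p ⊓ LinearMap.ker f : Submodule K V)
      = Module.finrank K p := by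
  have h := LinearMap.finrank_range_add_finrank_ker (f.domRestrict p)
  rw [LinearMap.range_domRestrict] at h
  have hker : Module.finrank K (LinearMap.ker (f.domRestrict p))
      = Module.finrank K (p ⊓ LinearMap.ker f : Submodule K V) := by
    rw [LinearMap.ker_domRestrict]
    rw [← Submodule.map_comap_subtype p (LinearMap.ker f)]
    exact (Submodule.equivMapOfInjective p.subtype (Submodule.injective_subtype p)
      _).finrank_eq
  rw [hker] at h
  exact h

end Aux

/-- If the columns of U10 form a basis of the left null space of H12, then
rank(U10ᵀ · H11) = rank([H11 | H12]) − rank(H12). -/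
theorem rank_leftNullBasis_mul {K : Type*} [Field K] {n1 m1 m2 d1 : ℕ}
    (H11 : Matrix (Fin n1) (Fin m1) K) (H12 : Matrix (Fin n1) (Fin m2) K)
    (U10 : Matrix (Fin n1) (Fin d1) K)
    (hU10li : LinearIndependent K (fun j => U10ᵀ j))
    (hU10span : Submodule.span K (Set.range (fun j => U10ᵀ j)) =
      LinearMap.ker (Matrix.mulVecLin H12ᵀ)) :
    (U10ᵀ * H11).rank = (Matrix.fromCols H11 H12).rank - H12.rank := by
  classical
  set A := H11.mulVecLin
  set B := H12.mulVecLin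
  set U := (U10ᵀ).mulVecLin
  -- rank of U10ᵀ is d1
  have hrankU : (U10ᵀ).rank = d1 := by
    have := hU10li.rank_matrix (M := U10ᵀ)
    simpa using this
  -- U10ᵀ * H12 = 0
  have hUH12 : U10ᵀ * H12 = 0 := by
    ext j k
    have hmem : U10ᵀ j ∈ LinearMap.ker (Matrix.mulVecLin H12ᵀ) := by
      rw [← hU10span]
      exact Submodule.subset_span ⟨j, rfl⟩
    have h0 : H12ᵀ *ᵥ (U10ᵀ j) = 0 := hmem
    have := congrFun h0 k
    simp only [Matrix.mulVec, dotProduct, Pi.zero_apply] at this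
    simp only [Matrix.mul_apply, Matrix.zero_apply, Matrix.transpose_apply] at *
    rw [← this]
    exact Finset.sum_congr rfl fun i _ => mul_comm _ _
  -- range B ≤ ker U
  have hle : LinearMap.range B ≤ LinearMap.ker U := by
    rintro v ⟨x, rfl⟩
    show U (B x) = 0
    have : U (B x) = ((U10ᵀ * H12).mulVecLin) x := by
      rw [Matrix.mulVecLin_mul]; rfl
    rw [this, hUH12]
    simp
  -- dimension of ker of H12ᵀ
  have hkerT : Module.finrank K (LinearMap.ker (Matrix.mulVecLin H12ᵀ)) = n1 - H12.rank := by
    have h := LinearMap.finrank_range_add_finrank_ker (Matrix.mulVecLin H12ᵀ)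
    have : H12ᵀ.rank + Module.finrank K (LinearMap.ker (Matrix.mulVecLin H12ᵀ)) = n1 := by
      rw [Matrix.rank]; simpa using h
    rw [Matrix.rank_transpose] at this
    omega
  -- d1 = n1 - rank H12
  have hd1 : d1 = n1 - H12.rank := by
    rw [← hkerT, ← hU10span]
    have := linearIndependent_iff_card_eq_finrank_span.mp hU10li
    simpa [Set.finrank] using this
  -- rank H12 ≤ n1
  have hr12 : H12.rank ≤ n1 := by
    simpa using H12.rank_le_card_height
  -- finrank ker U = rank H12
  have hkerU : Module.finrank K (LinearMap.ker U) = H12.rank := by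
    have h := LinearMap.finrank_range_add_finrank_ker U
    have hU : Module.finrank K (LinearMap.range U) = d1 := hrankU
    rw [hU] at h
    simp only [Module.finrank_fintype_fun_eq_card, Fintype.card_fin] at h
    omega
  -- hence ker U = range B
  have hkereq : LinearMap.ker U = LinearMap.range B := by
    symm
    apply Submodule.eq_of_le_of_finrank_eq hle
    rw [hkerU, Matrix.rank]
  -- rank of fromColumns
  have hrange_fc : LinearMap.range (Matrix.fromCols H11 H12).mulVecLin
      = LinearMap.range A ⊔ LinearMap.range B := by
    apply le_antisymm
    · rintro v ⟨x, rfl⟩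
      have hx : x = Sum.elim (x ∘ Sum.inl) (x ∘ Sum.inr) := by
        ext (i | i) <;> rfl
      rw [Matrix.mulVecLin_apply, hx, Matrix.fromCols_mulVec_sumElim]
      exact Submodule.add_mem_sup ⟨x ∘ Sum.inl, rfl⟩ ⟨x ∘ Sum.inr, rfl⟩
    · rw [sup_le_iff]
      constructor
      · rintro v ⟨x, rfl⟩
        exact ⟨Sum.elim x 0, by simp [Matrix.fromCols_mulVec_sumElim]; rfl⟩
      · rintro v ⟨x, rfl⟩
        exact ⟨Sum.elim 0 x, by simp [Matrix.fromCols_mulVec_sumElim]; rfl⟩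
  -- main computation
  have hcomp : (U10ᵀ * H11).rank + Module.finrank K
      (LinearMap.range A ⊓ LinearMap.range B : Submodule K (Fin n1 → K))
      = H11.rank := by
    have h := finrank_map_add_finrank_inf_ker U (LinearMap.range A)
    rw [hkereq] at h
    have hrr : LinearMap.range (U10ᵀ * H11).mulVecLin = (LinearMap.range A).map U := by
      rw [Matrix.mulVecLin_mul, LinearMap.range_comp]
    rw [Matrix.rank, Matrix.rank, hrr]
    exact h
  have hsup : (Matrix.fromCols H11 H12).rank + Module.finrank K
      (LinearMap.range A ⊓ LinearMap.range B : Submodule K (Fin n1 → K))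
      = H11.rank + H12.rank := by
    have h := Submodule.finrank_sup_add_finrank_inf_eq (LinearMap.range A) (LinearMap.range B)
    rw [Matrix.rank, hrange_fc]
    exact h
  omega
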